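/- Let p be a prime, s ≥ 1, and let L = ℚ(ζ) be the p^s-th cyclotomic field over ℚ with ζ a primitive p^s-th root of unity. Let K be an intermediate field of L/ℚ such that ζ^{p^{s−1}} ∈ K (a primitive p-th root of unity), and such that if p = 2 then s ≥ 2 and ζ^{2^{s−2}} ∈ K (a primitive fourth root of unity). Then for every integer i with ζ^i ∉ K, one has Tr_{L/K}(ζ^i) = 0. -/

import Mathlib

private lemma aux_sq_dvd (e : ℤ) : ∀ k : ℕ, e^2 ∣ (1+e)^k - 1 - k*e := by
  intro k
  induction k with
  | zero => simp
  | succ k ih =>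
    have h : (1+e)^(k+1) - 1 - ((k:ℤ)+1)*e
        = (1+e)*((1+e)^k - 1 - k*e) + k*e^2 := by ring
    push_cast
    rw [h]
    exact dvd_add (Dvd.dvd.mul_left ih _) (Dvd.dvd.mul_left dvd_rfl _)

private lemma lemA (p : ℕ) (hp : p.Prime) (e : ℤ) (hpe : (p:ℤ) ∣ e) (h2 : p = 2 → 4 ∣ e) :
    ((p:ℤ))^2 ∣ (∑ k ∈ Finset.range p, (1+e)^k) - p := by
  have hsplit : (∑ k ∈ Finset.range p, (1+e)^k) - p
      = (∑ k ∈ Finset.range p, ((1+e)^k - 1 - k*e)) + (∑ k ∈ Finset.range p, (k:ℤ)) * e := by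
    rw [Finset.sum_sub_distrib, Finset.sum_sub_distrib, ← Finset.sum_mul]
    simp
  rw [hsplit]
  refine dvd_add (Finset.dvd_sum fun k _ => dvd_trans (pow_dvd_pow_of_dvd hpe 2) (aux_sq_dvd e k)) ?_
  rcases eq_or_ne p 2 with hp2 | hp2
  · subst hp2
    have h1 : (∑ k ∈ Finset.range 2, (k:ℤ)) = 1 := by decide
    rw [h1, one_mul]
    exact_mod_cast h2 rfl
  · have hodd : p % 2 = 1 := Nat.odd_iff.mp (hp.odd_of_ne_two hp2)
    set r := p / 2 with hrdef
    have hr : p = 2*r+1 := by omega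
    have hsum : (∑ k ∈ Finset.range p, k) = p * r := by
      have h2' : (∑ k ∈ Finset.range p, k) * 2 = (p * r) * 2 := by
        rw [Finset.sum_range_id_mul_two]
        rw [hr]
        have h3 : (2*r+1) - 1 = 2*r := by omega
        rw [h3]; ring
      exact Nat.eq_of_mul_eq_mul_right (by norm_num) h2'
    have hcast : (∑ k ∈ Finset.range p, (k:ℤ)) = (p:ℤ) * r := by
      rw [← Nat.cast_sum, hsum]; push_cast; ring
    rw [hcast]
    obtain ⟨c, hc⟩ := hpe
    rw [hc]
    exact ⟨r * c, by ring⟩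

private lemma lemB (p : ℕ) (hp : p.Prime) {a : ℤ} (ha : (p:ℤ) ∣ a - 1) :
    ∀ k : ℕ, ((p:ℤ))^(k+1) ∣ a^(p^k) - 1 := by
  intro k
  induction k with
  | zero => simpa using ha
  | succ k ih =>
    set b := a^(p^k) with hbdef
    have hb : a^(p^(k+1)) - 1 = (∑ j ∈ Finset.range p, b^j) * (b - 1) := by
      rw [geom_sum_mul, hbdef, ← pow_mul, ← pow_succ]
    have hpb : (p:ℤ) ∣ b - 1 :=
      dvd_trans ha (by simpa using sub_dvd_pow_sub_pow a 1 (p^k))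
    have hpS : (p:ℤ) ∣ ∑ j ∈ Finset.range p, b^j := by
      have h1 : (∑ j ∈ Finset.range p, b^j) = (∑ j ∈ Finset.range p, (b^j - 1)) + p := by
        rw [Finset.sum_sub_distrib]; simp
      rw [h1]
      exact dvd_add (Finset.dvd_sum fun j _ =>
        dvd_trans hpb (by simpa using sub_dvd_pow_sub_pow b 1 j)) dvd_rfl
    rw [hb]
    calc ((p:ℤ))^(k+1+1) = (p:ℤ) * (p:ℤ)^(k+1) := by ring
    _ ∣ (∑ j ∈ Finset.range p, b^j) * (b - 1) := mul_dvd_mul hpS ih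

/-- Let `p` be a prime, `s ≥ 1`, and `L = ℚ(ζ)` the `p^s`-th cyclotomic field over `ℚ`
with `ζ` a primitive `p^s`-th root of unity. Let `K` be an intermediate field of `L/ℚ`
such that `ζ^{p^{s−1}} ∈ K` (a primitive `p`-th root of unity), and such that if `p = 2`
then `s ≥ 2` and `ζ^{2^{s−2}} ∈ K` (a primitive fourth root of unity). Then for every
integer `i` with `ζ^i ∉ K`, one has `Tr_{L/K}(ζ^i) = 0`. -/
theorem stmt_11 (p : ℕ) (hp : p.Prime) (s : ℕ) (hs : 1 ≤ s)
    (N : ℕ+) (hN : (N : ℕ) = p ^ s)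
    (ζ : CyclotomicField N ℚ) (hζ : IsPrimitiveRoot ζ (p ^ s))
    (K : IntermediateField ℚ (CyclotomicField N ℚ))
    (hK : ζ ^ (p ^ (s - 1)) ∈ K)
    (hK2 : p = 2 → 2 ≤ s ∧ ζ ^ (2 ^ (s - 2)) ∈ K) :
    ∀ i : ℤ, ζ ^ i ∉ K → Algebra.trace K (CyclotomicField N ℚ) (ζ ^ i) = 0 := by
  intro i hi
  have hppos : 0 < p := hp.pos
  have hq0 : (p:ℕ)^s ≠ 0 := pow_ne_zero _ hppos.ne'
  haveI : NeZero (p ^ s) := ⟨hq0⟩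
  have hζ0 : ζ ≠ 0 := hζ.ne_zero hq0
  -- instances
  haveI : NeZero ((N:ℕ):ℚ) := ⟨by exact_mod_cast N.ne_zero⟩
  haveI : IsGalois ℚ (CyclotomicField N ℚ) := @IsCyclotomicExtension.isGalois {(N:ℕ)} ℚ (CyclotomicField N ℚ) _ _ _ (CyclotomicField.isCyclotomicExtension (N:ℕ) ℚ)
  haveI : FiniteDimensional ℚ (CyclotomicField N ℚ) :=
    @IsCyclotomicExtension.finiteDimensional {(N:ℕ)} ℚ _ (CyclotomicField N ℚ) _ _ _ _ (CyclotomicField.isCyclotomicExtension (N:ℕ) ℚ)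
  haveI : FiniteDimensional K (CyclotomicField N ℚ) := Module.Finite.right ℚ K _
  haveI : IsGalois K (CyclotomicField N ℚ) := IsGalois.tower_top_of_isGalois ℚ K _
  -- elements of K are fixed
  have hfixK : ∀ (σ : CyclotomicField N ℚ ≃ₐ[K] CyclotomicField N ℚ) (x : CyclotomicField N ℚ),
      x ∈ K → σ x = x := fun σ x hx => σ.commutes ⟨x, hx⟩
  -- there is an automorphism moving ζ^i
  obtain ⟨σ1, hσ1⟩ : ∃ σ : CyclotomicField N ℚ ≃ₐ[K] CyclotomicField N ℚ, σ (ζ^i) ≠ ζ^i := by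
    by_contra h
    push_neg at h
    apply hi
    have hmem : ζ^i ∈ IntermediateField.fixedField
        (⊤ : Subgroup (CyclotomicField N ℚ ≃ₐ[K] CyclotomicField N ℚ)) :=
      fun g => h g
    have htfae := (IsGalois.tfae (F := K) (E := CyclotomicField N ℚ)).out 0 1
    rw [htfae.mp (inferInstance : IsGalois K (CyclotomicField N ℚ))] at hmem
    obtain ⟨y, hy⟩ := IntermediateField.mem_bot.mp hmem
    rw [← hy]
    exact y.2
  -- σ1 ζ = ζ ^ a
  have hps : (σ1 ζ)^(p^s) = 1 := by rw [← map_pow, hζ.pow_eq_one, map_one]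
  obtain ⟨a, -, ha⟩ := hζ.eq_pow_of_pow_eq_one hps
  set A : ℤ := (a : ℤ) with hAdef
  have hzpowA : ∀ m : ℤ, σ1 (ζ ^ m) = ζ ^ (A * m) := by
    intro m
    rw [map_zpow₀, ← ha, ← zpow_natCast, ← zpow_mul, hAdef]
  have hpowm : ∀ m : ℕ, ∀ x : ℤ, (σ1 ^ m) (ζ ^ x) = ζ ^ (A ^ m * x) := by
    intro m
    induction m with
    | zero => intro x; simp
    | succ m ih =>
      intro x
      rw [pow_succ, AlgEquiv.mul_apply, hzpowA, ih]
      congr 1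
      ring
  -- divisibility criteria
  have hdvd_iff : ∀ m : ℤ, ζ ^ m = 1 ↔ ((p:ℤ)^s ∣ m) := by
    intro m
    rw [hζ.zpow_eq_one_iff_dvd]
    constructor
    · intro h; exact_mod_cast h
    · intro h; exact_mod_cast h
  have hA1 : (p:ℤ) ∣ A - 1 := by
    have heq : ζ ^ ((p:ℤ)^(s-1)) = ζ ^ ((p^(s-1) : ℕ)) := by
      rw [← zpow_natCast]; push_cast; rfl
    have hfix : σ1 (ζ ^ ((p:ℤ)^(s-1))) = ζ ^ ((p:ℤ)^(s-1)) := by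
      rw [heq]; exact hfixK σ1 _ hK
    rw [hzpowA] at hfix
    have h1 : ζ ^ (A * (p:ℤ)^(s-1) - (p:ℤ)^(s-1)) = 1 := by
      rw [zpow_sub₀ hζ0, hfix, div_self (zpow_ne_zero _ hζ0)]
    rw [hdvd_iff] at h1
    have hsplit : A * (p:ℤ)^(s-1) - (p:ℤ)^(s-1) = (A - 1) * (p:ℤ)^(s-1) := by ring
    rw [hsplit] at h1
    have hqs : (p:ℤ)^s = (p:ℤ) * (p:ℤ)^(s-1) := by
      rw [← pow_succ']
      congr 1
      omega
    rw [hqs] at h1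
    obtain ⟨c, hc⟩ := h1
    have hpne : ((p:ℤ))^(s-1) ≠ 0 := pow_ne_zero _ (by exact_mod_cast hppos.ne')
    refine ⟨c, mul_right_cancel₀ hpne ?_⟩
    rw [hc]; ring
  have hA2 : p = 2 → (4:ℤ) ∣ A - 1 := by
    intro hp2
    obtain ⟨hs2, hK4⟩ := hK2 hp2
    subst hp2
    have heq : ζ ^ ((2:ℤ)^(s-2)) = ζ ^ ((2^(s-2) : ℕ)) := by
      rw [← zpow_natCast]; push_cast; rfl
    have hfix : σ1 (ζ ^ ((2:ℤ)^(s-2))) = ζ ^ ((2:ℤ)^(s-2)) := by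
      rw [heq]; exact hfixK σ1 _ hK4
    rw [hzpowA] at hfix
    have h1 : ζ ^ (A * (2:ℤ)^(s-2) - (2:ℤ)^(s-2)) = 1 := by
      rw [zpow_sub₀ hζ0, hfix, div_self (zpow_ne_zero _ hζ0)]
    rw [hdvd_iff] at h1
    have hsplit : A * (2:ℤ)^(s-2) - (2:ℤ)^(s-2) = (A - 1) * (2:ℤ)^(s-2) := by ring
    rw [hsplit] at h1
    have hqs : ((2:ℕ):ℤ)^s = (4:ℤ) * (2:ℤ)^(s-2) := by
      have hseq : s = (s - 2) + 2 := by omega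
      rw [hseq]
      push_cast
      ring
    rw [hqs] at h1
    obtain ⟨c, hc⟩ := h1
    have hpne : ((2:ℤ))^(s-2) ≠ 0 := pow_ne_zero _ two_ne_zero
    refine ⟨c, mul_right_cancel₀ hpne ?_⟩
    rw [hc]; ring
  -- find the right power of σ1
  have hex : ∃ m : ℕ, ((p:ℤ))^s ∣ (A^(p^m) - 1) * i := by
    refine ⟨s, dvd_mul_of_dvd_left ?_ i⟩
    exact dvd_trans (pow_dvd_pow _ (Nat.le_succ s)) (lemB p hp hA1 s)
  classical
  set m0 := Nat.find hex with hm0def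
  have hm0 : ((p:ℤ))^s ∣ (A^(p^m0) - 1) * i := Nat.find_spec hex
  have hm0pos : 0 < m0 := by
    rcases Nat.eq_zero_or_pos m0 with h0 | h0
    · exfalso
      apply hσ1
      have h := hm0
      rw [h0] at h
      simp only [pow_zero, pow_one] at h
      have hζfix : ζ ^ ((A - 1) * i) = 1 := (hdvd_iff _).mpr h
      have hh : σ1 (ζ ^ i) = ζ ^ i * ζ ^ ((A - 1) * i) := by
        rw [hzpowA, ← zpow_add₀ hζ0]
        congr 1
        ring
      rw [hh, hζfix, mul_one]
    · exact h0
  set n : ℕ := p ^ (m0 - 1) with hndef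
  set B : ℤ := A ^ n with hBdef
  have hB1 : ¬ ((p:ℤ))^s ∣ (B - 1) * i := Nat.find_min hex (show m0 - 1 < m0 by omega)
  have hB2 : ((p:ℤ))^s ∣ (B^p - 1) * i := by
    have hBp : B ^ p = A ^ (p ^ m0) := by
      have hmm : m0 - 1 + 1 = m0 := by omega
      rw [hBdef, ← pow_mul, ← pow_succ, hmm]
    rw [hBp]
    exact hm0
  have hBp1 : (p:ℤ) ∣ B - 1 :=
    dvd_trans hA1 (by simpa using sub_dvd_pow_sub_pow A 1 n)
  have hB4 : p = 2 → (4:ℤ) ∣ B - 1 := fun h2 =>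
    dvd_trans (hA2 h2) (by simpa using sub_dvd_pow_sub_pow A 1 n)
  -- the geometric sum S = p * u with p ∤ u
  set S : ℤ := ∑ k ∈ Finset.range p, B^k with hSdef
  have hgeom : S * (B - 1) = B^p - 1 := geom_sum_mul B p
  have hSA : ((p:ℤ))^2 ∣ S - p := by
    have hSS : S = ∑ k ∈ Finset.range p, (1 + (B-1))^k := by
      rw [hSdef]
      congr 1
      ext k
      ring_nf
    rw [hSS]
    exact lemA p hp (B - 1) hBp1 hB4
  obtain ⟨c, hc⟩ := hSA
  set u : ℤ := 1 + p * c with hudef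
  have hSu : S = p * u := by
    have : (p:ℤ)^2 = p * p := sq (p:ℤ)
    rw [hudef]
    nlinarith [hc]
  have hpu : ¬ (p:ℤ) ∣ u := by
    intro h
    obtain ⟨d, hd⟩ := h
    have : (1:ℤ) = p * (d - c) := by rw [hudef] at hd; linarith [hd]
    have h1 : (p:ℤ) ∣ 1 := ⟨d - c, this⟩
    have h2 := Int.le_of_dvd one_pos h1
    have hp2 := hp.two_le
    omega
  -- p^(s-1) ∣ (B-1) * i
  have hkey : ((p:ℤ))^(s-1) ∣ (B - 1) * i := by
    have h1 : ((p:ℤ))^s ∣ (p:ℤ) * (u * ((B - 1) * i)) := by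
      have heq2 : (p:ℤ) * (u * ((B - 1) * i)) = (B^p - 1) * i := by
        rw [← hgeom, hSu]; ring
      rw [heq2]
      exact hB2
    have hqs : ((p:ℤ))^s = (p:ℤ) * (p:ℤ)^(s-1) := by
      rw [← pow_succ']
      congr 1
      omega
    rw [hqs] at h1
    have hpne : ((p:ℤ)) ≠ 0 := by exact_mod_cast hppos.ne'
    have h2 : ((p:ℤ))^(s-1) ∣ u * ((B - 1) * i) := (mul_dvd_mul_iff_left hpne).mp h1
    have hcop : IsCoprime ((p:ℤ)^(s-1)) u :=
      IsCoprime.pow_left ((Nat.prime_iff_prime_int.mp hp).irreducible.coprime_iff_not_dvd.mpr hpu)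
    exact hcop.dvd_of_dvd_mul_left h2
  -- define η
  set η : CyclotomicField N ℚ := ζ ^ ((B - 1) * i) with hηdef
  have hη1 : η ≠ 1 := by
    rw [hηdef]
    intro h
    exact hB1 ((hdvd_iff _).mp h)
  have hηK : η ∈ K := by
    obtain ⟨c2, hc2⟩ := hkey
    rw [hηdef, hc2, zpow_mul]
    have heq : ζ ^ ((p:ℤ)^(s-1)) = ζ ^ ((p^(s-1) : ℕ)) := by
      rw [← zpow_natCast]; push_cast; rfl
    rw [heq]
    exact zpow_mem hK c2
  set σ0 := σ1 ^ n with hσ0def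
  have hσ0 : σ0 (ζ ^ i) = ζ ^ i * η := by
    rw [hσ0def, hpowm n i, hηdef, ← zpow_add₀ hζ0]
    congr 1
    rw [hBdef]
    ring
  -- reindex the trace sum
  have htr : algebraMap K (CyclotomicField N ℚ) (Algebra.trace K (CyclotomicField N ℚ) (ζ^i))
      = ∑ σ : CyclotomicField N ℚ ≃ₐ[K] CyclotomicField N ℚ, σ (ζ^i) :=
    trace_eq_sum_automorphisms (ζ^i)
  have hreindex : ∑ σ : CyclotomicField N ℚ ≃ₐ[K] CyclotomicField N ℚ, σ (ζ^i)
      = η * ∑ σ : CyclotomicField N ℚ ≃ₐ[K] CyclotomicField N ℚ, σ (ζ^i) := by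
    calc ∑ σ : CyclotomicField N ℚ ≃ₐ[K] CyclotomicField N ℚ, σ (ζ^i)
        = ∑ σ : CyclotomicField N ℚ ≃ₐ[K] CyclotomicField N ℚ, σ (σ0 (ζ^i)) := by
          refine (Fintype.sum_equiv (Equiv.mulRight σ0) _ _ fun σ => ?_).symm
          rfl
      _ = ∑ σ : CyclotomicField N ℚ ≃ₐ[K] CyclotomicField N ℚ, η * σ (ζ^i) := by
          refine Finset.sum_congr rfl fun σ _ => ?_
          rw [hσ0, map_mul, hfixK σ η hηK]
          ring
      _ = η * ∑ σ : CyclotomicField N ℚ ≃ₐ[K] CyclotomicField N ℚ, σ (ζ^i) := by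
          rw [Finset.mul_sum]
  have hzero : ∑ σ : CyclotomicField N ℚ ≃ₐ[K] CyclotomicField N ℚ, σ (ζ^i) = 0 := by
    have hfactor : (1 - η) * ∑ σ : CyclotomicField N ℚ ≃ₐ[K] CyclotomicField N ℚ, σ (ζ^i) = 0 := by
      rw [sub_mul, one_mul, ← hreindex, sub_self]
    rcases mul_eq_zero.mp hfactor with h1 | h2
    · exact absurd (by linear_combination -h1 : η = 1) hη1
    · exact h2
  have hfin : algebraMap K (CyclotomicField N ℚ) (Algebra.trace K (CyclotomicField N ℚ) (ζ^i))
      = algebraMap K (CyclotomicField N ℚ) 0 := by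
    rw [htr, hzero, map_zero]
  exact (algebraMap K (CyclotomicField N ℚ)).injective hfin
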